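/- Suppose 0 < b(x) ≤ b̄ for a.e. x with b̄(1 + √(2b̄)) < 1, and let u ∈ C¹[ŷ,1] with u ≥ 1, u(1) = 1, u_x(ŷ) = 0, 1 - ŷ ≤ 1, satisfying the energy identity ∫_ŷ^1 ((u+1)/(2u))|[(u-1)²]_x|² dx ≤ ∫_ŷ^1 (b - 1/u)(u-1)² dx. If additionally ∫_ŷ^1 (u-1)^4 ≤ ∫_ŷ^1 |[(u-1)²]_x|², then u ≡ 1 on [ŷ,1]. -/

import Mathlib

open MeasureTheory Set intervalIntegral

/-- Non-existence of nontrivial interior supersonic profiles with small doping: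
if `0 < b ≤ b̄` a.e. with `b̄(1+√(2b̄)) < 1`, and `u ∈ C¹[ŷ,1]`, `u ≥ 1`,
`u(1) = 1`, `u_x(ŷ) = 0`, `1 - ŷ ≤ 1`, satisfies the energy inequality
`∫_ŷ¹ ((u+1)/(2u))|[(u-1)²]_x|² ≤ ∫_ŷ¹ (b - 1/u)(u-1)²` together with the
Poincaré inequality `∫_ŷ¹ (u-1)⁴ ≤ ∫_ŷ¹ |[(u-1)²]_x|²`, then `u ≡ 1` on `[ŷ,1]`. -/
theorem stmt_18 (bbar yhat : ℝ) (hbbar : bbar*(1 + Real.sqrt (2*bbar)) < 1)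
    (hbbar0 : 0 < bbar) (hy0 : 0 ≤ yhat) (hy1 : yhat < 1)
    (b u u' : ℝ → ℝ)
    (hbmeas : Measurable b)
    (hb : ∀ᵐ x ∂MeasureTheory.volume, x ∈ Set.Icc yhat 1 → 0 < b x ∧ b x ≤ bbar)
    (hdiff : ∀ x ∈ Set.Icc yhat 1, HasDerivWithinAt u (u' x) (Set.Icc yhat 1) x)
    (hu'c : ContinuousOn u' (Set.Icc yhat 1))
    (huge : ∀ x ∈ Set.Icc yhat 1, 1 ≤ u x)
    (hu1 : u 1 = 1)
    (hu'0 : u' yhat = 0)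
    (henergy : (∫ x in yhat..1, ((u x + 1)/(2*u x)) * (2*(u x - 1)*u' x)^2)
      ≤ ∫ x in yhat..1, (b x - 1/u x) * (u x - 1)^2)
    (hpoincare : (∫ x in yhat..1, (u x - 1)^4)
      ≤ ∫ x in yhat..1, (2*(u x - 1)*u' x)^2) :
    ∀ x ∈ Set.Icc yhat 1, u x = 1 := by
  have hy : yhat ≤ 1 := hy1.le
  have huIcc : Set.uIcc yhat 1 = Set.Icc yhat 1 := Set.uIcc_of_le hy
  have hucont : ContinuousOn u (Set.Icc yhat 1) :=
    fun x hx => (hdiff x hx).continuousWithinAt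
  -- bbar < 1/2
  have hb2 : bbar < 1/2 := by
    by_contra h
    push_neg at h
    have h1 : (1:ℝ) ≤ Real.sqrt (2*bbar) := by
      rw [show (1:ℝ) = Real.sqrt 1 by simp]
      exact Real.sqrt_le_sqrt (by linarith)
    nlinarith
  -- continuity of the various integrands
  have hune : ∀ x ∈ Set.Icc yhat 1, u x ≠ 0 := fun x hx => by
    have := huge x hx; linarith
  have hgc : ContinuousOn (fun x => (2*(u x - 1)*u' x)^2) (Set.Icc yhat 1) :=
    (((continuousOn_const.mul (hucont.sub continuousOn_const)).mul hu'c).pow 2)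
  have h6c : ContinuousOn (fun x => (u x - 1)^2) (Set.Icc yhat 1) :=
    ((hucont.sub continuousOn_const).pow 2)
  have h4c : ContinuousOn (fun x => (u x - 1)^4) (Set.Icc yhat 1) :=
    ((hucont.sub continuousOn_const).pow 4)
  have hinvc : ContinuousOn (fun x => 1/u x) (Set.Icc yhat 1) :=
    continuousOn_const.div hucont hune
  have If5 : IntervalIntegrable (fun x => (2*(u x - 1)*u' x)^2) volume yhat 1 :=
    (huIcc ▸ hgc).intervalIntegrable
  have If6 : IntervalIntegrable (fun x => (u x - 1)^2) volume yhat 1 :=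
    (huIcc ▸ h6c).intervalIntegrable
  have If4 : IntervalIntegrable (fun x => (u x - 1)^4) volume yhat 1 :=
    (huIcc ▸ h4c).intervalIntegrable
  have Ihalf : IntervalIntegrable (fun x => (1/2) * (2*(u x - 1)*u' x)^2) volume yhat 1 :=
    If5.const_mul _
  have If1 : IntervalIntegrable (fun x => ((u x + 1)/(2*u x)) * (2*(u x - 1)*u' x)^2)
      volume yhat 1 := by
    apply ContinuousOn.intervalIntegrable
    rw [huIcc]
    exact ((hucont.add continuousOn_const).div (continuousOn_const.mul hucont)
      (fun x hx => by have := huge x hx; intro hc; simp only [Pi.mul_apply] at hc; nlinarith)).mul hgc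
  have If3 : IntervalIntegrable
      (fun x => (bbar - 1/2) * (u x - 1)^2 + (1/2) * (u x - 1)^4) volume yhat 1 :=
    (If6.const_mul _).add (If4.const_mul _)
  -- integrability of the doping term
  have If2 : IntervalIntegrable (fun x => (b x - 1/u x) * (u x - 1)^2) volume yhat 1 := by
    rw [intervalIntegrable_iff_integrableOn_Ioc_of_le hy]
    obtain ⟨C, hC⟩ := isCompact_Icc.exists_bound_of_continuousOn hucont
    have hres : (volume.restrict (Set.Ioc yhat 1)) ≤ volume.restrict (Set.Icc yhat 1) :=
      Measure.restrict_mono Set.Ioc_subset_Icc_self le_rfl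
    have hmg : AEStronglyMeasurable (fun x => (b x - 1/u x) * (u x - 1)^2)
        (volume.restrict (Set.Ioc yhat 1)) := by
      apply AEStronglyMeasurable.mul
      · exact (hbmeas.aestronglyMeasurable.sub
          (((hinvc.aestronglyMeasurable measurableSet_Icc).mono_measure hres)))
      · exact ((h6c.aestronglyMeasurable measurableSet_Icc).mono_measure hres)
    refine ⟨hmg, ?_⟩
    apply MeasureTheory.HasFiniteIntegral.of_bounded
      (C := (bbar + 1) * (C + 1)^2)
    have hmem : ∀ᵐ x ∂(volume.restrict (Set.Ioc yhat 1)), x ∈ Set.Ioc yhat 1 :=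
      ae_restrict_mem measurableSet_Ioc
    have hb' : ∀ᵐ x ∂(volume.restrict (Set.Ioc yhat 1)),
        x ∈ Set.Icc yhat 1 → 0 < b x ∧ b x ≤ bbar := ae_restrict_of_ae hb
    filter_upwards [hmem, hb'] with x hx hbx
    have hxI : x ∈ Set.Icc yhat 1 := Set.Ioc_subset_Icc_self hx
    obtain ⟨hb0, hbb⟩ := hbx hxI
    have hu1' := huge x hxI
    have hCx := hC x hxI
    rw [Real.norm_eq_abs] at hCx ⊢
    have hinv : 0 < 1/u x := by positivity
    have hinv1 : 1/u x ≤ 1 := by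
      rw [div_le_one (by linarith)]; linarith
    have habs : |b x - 1/u x| ≤ bbar + 1 := by
      rw [abs_le]; constructor <;> nlinarith
    have hsq : (u x - 1)^2 ≤ (C + 1)^2 := by
      have h1 : u x - 1 ≤ C + 1 := by
        have := le_abs_self (u x); linarith
      have h2 : 0 ≤ u x - 1 := by linarith
      nlinarith
    calc |(b x - 1/u x) * (u x - 1)^2| = |b x - 1/u x| * (u x - 1)^2 := by
          rw [abs_mul, abs_of_nonneg (sq_nonneg (u x - 1))]
      _ ≤ (bbar + 1) * (C + 1)^2 := by
          apply mul_le_mul habs hsq (sq_nonneg _) (by positivity)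
  -- step 1 : (1/2) ∫ g² ≤ ∫ ((u+1)/(2u)) g²
  have step1 : (∫ x in yhat..1, (1/2) * (2*(u x - 1)*u' x)^2)
      ≤ ∫ x in yhat..1, ((u x + 1)/(2*u x)) * (2*(u x - 1)*u' x)^2 := by
    apply intervalIntegral.integral_mono_on hy Ihalf If1
    intro x hx
    have ht := huge x hx
    have hcoef : (1:ℝ)/2 ≤ (u x + 1)/(2*u x) := by
      rw [div_le_div_iff₀ (by norm_num) (by linarith)]
      nlinarith
    exact mul_le_mul_of_nonneg_right hcoef (sq_nonneg _)
  -- step 2 : ∫ (b - 1/u)(u-1)² ≤ (bbar-1/2)∫(u-1)² + (1/2)∫(u-1)⁴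
  have step2 : (∫ x in yhat..1, (b x - 1/u x) * (u x - 1)^2)
      ≤ ∫ x in yhat..1, ((bbar - 1/2) * (u x - 1)^2 + (1/2) * (u x - 1)^4) := by
    apply intervalIntegral.integral_mono_ae_restrict hy If2 If3
    have hmem : ∀ᵐ x ∂(volume.restrict (Set.Icc yhat 1)), x ∈ Set.Icc yhat 1 :=
      ae_restrict_mem measurableSet_Icc
    have hb' : ∀ᵐ x ∂(volume.restrict (Set.Icc yhat 1)),
        x ∈ Set.Icc yhat 1 → 0 < b x ∧ b x ≤ bbar := ae_restrict_of_ae hb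
    filter_upwards [hmem, hb'] with x hx hbx
    obtain ⟨hb0, hbb⟩ := hbx hx
    have ht := huge x hx
    have hinv : 2 - u x ≤ 1/u x := by
      rw [le_div_iff₀ (by linarith)]
      nlinarith [sq_nonneg (u x - 1)]
    have h1 : (b x - 1/u x) * (u x - 1)^2 ≤ (bbar - 2 + u x) * (u x - 1)^2 :=
      mul_le_mul_of_nonneg_right (by linarith) (sq_nonneg _)
    have h2 : (bbar - 2 + u x) * (u x - 1)^2
        ≤ (bbar - 1/2) * (u x - 1)^2 + (1/2) * (u x - 1)^4 := by
      nlinarith [sq_nonneg ((u x - 1) * (u x - 2))]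
    calc (b x - 1/u x) * (u x - 1)^2 ≤ _ := h1
      _ ≤ _ := h2
  -- assemble
  have hA2 : (∫ x in yhat..1, (1/2) * (2*(u x - 1)*u' x)^2)
      = (1/2) * ∫ x in yhat..1, (2*(u x - 1)*u' x)^2 :=
    intervalIntegral.integral_const_mul _ _
  have hF3 : (∫ x in yhat..1, ((bbar - 1/2) * (u x - 1)^2 + (1/2) * (u x - 1)^4))
      = (bbar - 1/2) * (∫ x in yhat..1, (u x - 1)^2)
        + (1/2) * ∫ x in yhat..1, (u x - 1)^4 := by
    rw [intervalIntegral.integral_add (If6.const_mul _) (If4.const_mul _),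
      intervalIntegral.integral_const_mul, intervalIntegral.integral_const_mul]
  have hBnn : 0 ≤ ∫ x in yhat..1, (u x - 1)^2 :=
    intervalIntegral.integral_nonneg hy (fun x _ => sq_nonneg _)
  have hB0 : (∫ x in yhat..1, (u x - 1)^2) = 0 := by
    have hchain := le_trans (le_trans (le_trans (hA2 ▸ step1) henergy) step2) (le_of_eq hF3)
    nlinarith
  -- conclude pointwise
  have hae : (fun x => (u x - 1)^2) =ᵐ[volume.restrict (Set.Ioc yhat 1)] 0 :=
    (intervalIntegral.integral_eq_zero_iff_of_le_of_nonneg_ae hy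
      (ae_of_all _ (fun x => sq_nonneg _)) If6).mp hB0
  have hres : volume.restrict (Set.Ioc yhat 1) = volume.restrict (Set.Icc yhat 1) :=
    Measure.restrict_congr_set Ioc_ae_eq_Icc
  rw [hres] at hae
  have hsub : Set.Icc yhat 1 ⊆ closure (interior (Set.Icc yhat 1)) := by
    rw [interior_Icc, closure_Ioo hy1.ne]
  have heq : Set.EqOn (fun x => (u x - 1)^2) 0 (Set.Icc yhat 1) :=
    Measure.eqOn_of_ae_eq hae h6c continuousOn_const hsub
  intro x hx
  have := heq hx
  simp only [Pi.zero_apply] at this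
  have := pow_eq_zero_iff (n := 2) (by norm_num) |>.mp this
  linarith
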